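/- Let T be a real 3×3 matrix with largest singular value T₁, and let E_NS be any correlation function admitting an LHS model. Then ∫_{S²}∫_{S²} (m · T n) · E_NS(m,n) dΩ(m) dΩ(n) ≤ (8π²/3) · T₁. -/

import Mathlib

open MeasureTheory

noncomputable section

/-- `ℝ³` with the Euclidean norm. -/
abbrev V3 : Type := EuclideanSpace ℝ (Fin 3)

/-- The unit sphere `S² ⊂ ℝ³` (as a subtype). -/
abbrev Sph : Type := Metric.sphere (0 : V3) 1

/-- The rotation-invariant surface measure `dΩ` on the unit sphere `S² ⊂ ℝ³`,
with total measure `4π`. -/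
def dOmega : Measure Sph := (volume : Measure V3).toSphere

/-- Euclidean dot product on `ℝ³`. -/
def dot (x y : V3) : ℝ := ∑ i, x i * y i

/-- The bilinear form `m · T n = ∑ᵢⱼ Tᵢⱼ mᵢ nⱼ` associated to a real `3×3` matrix `T`. -/
def bilin (T : Matrix (Fin 3) (Fin 3) ℝ) (m n : V3) : ℝ := ∑ i, ∑ j, T i j * m i * n j

/-- A local-hidden-state (LHS, non-steering) model for a correlation function `E` on `S²×S²`:
a finite index set, probabilities `p λ ≥ 0` summing to `1`, measurable response functions
`I(·,λ) : S² → [-1,1]`, and unit (Bloch) vectors `λ⃗_λ ∈ ℝ³` reproducing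
`E(m,n) = ∑_λ p_λ I(m,λ) (n · λ⃗_λ)` for all unit vectors `m, n`. -/
def HasLHSModel (E : V3 → V3 → ℝ) : Prop :=
  ∃ (N : ℕ) (p : Fin N → ℝ) (I : Fin N → Sph → ℝ) (lam : Fin N → V3),
    (∀ l, 0 ≤ p l) ∧ (∑ l, p l) = 1 ∧
    (∀ l, Measurable (I l)) ∧
    (∀ l m, |I l m| ≤ 1) ∧
    (∀ l, ‖lam l‖ = 1) ∧
    (∀ m n : Sph, E m n = ∑ l, p l * I l m * dot n (lam l))

/-- The largest singular value of `T`, i.e. the supremum of `m · T n` over unit vectors. -/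
def maxSingularValue (T : Matrix (Fin 3) (Fin 3) ℝ) : ℝ :=
  sSup {x : ℝ | ∃ m n : V3, ‖m‖ = 1 ∧ ‖n‖ = 1 ∧ x = bilin T m n}

/-! ### Auxiliary material -/

section Aux
open Real Set Metric

instance : IsFiniteMeasure dOmega := by unfold dOmega; infer_instance

/-! #### One-dimensional Gaussian integrals -/

lemma ioi_moment (k : ℕ) :
    ∫ r in Set.Ioi (0:ℝ), r ^ k * Real.exp (-r ^ 2)
      = (1 / 2) * Real.Gamma ((k + 1) / 2) := by
  rw [← integral_rpow_mul_exp_neg_rpow (p := 2) (q := k) (by norm_num)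
    (by exact lt_of_lt_of_le (by norm_num) (Nat.cast_nonneg k))]
  refine setIntegral_congr_fun measurableSet_Ioi fun x hx => ?_
  rw [Real.rpow_natCast, Real.rpow_two]

lemma ioi1 : ∫ r in Set.Ioi (0:ℝ), r * Real.exp (-r ^ 2) = 1 / 2 := by
  have := ioi_moment 1
  simp only [pow_one] at this
  rw [this]
  norm_num [Real.Gamma_one]

lemma ioi2 : ∫ r in Set.Ioi (0:ℝ), r ^ 2 * Real.exp (-r ^ 2) = Real.sqrt π / 4 := by
  rw [ioi_moment 2]
  have h1 : ((2:ℕ) + 1 : ℝ) / 2 = 1/2 + 1 := by norm_num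
  rw [h1, Real.Gamma_add_one (by norm_num), Real.Gamma_one_half_eq]
  ring

lemma ioi3 : ∫ r in Set.Ioi (0:ℝ), r ^ 3 * Real.exp (-r ^ 2) = 1 / 2 := by
  rw [ioi_moment 3]
  norm_num [Real.Gamma_two]

lemma ioi4 : ∫ r in Set.Ioi (0:ℝ), r ^ 4 * Real.exp (-r ^ 2) = 3 * Real.sqrt π / 8 := by
  rw [ioi_moment 4]
  have h1 : ((4:ℕ) + 1 : ℝ) / 2 = 3/2 + 1 := by norm_num
  rw [h1, Real.Gamma_add_one (by norm_num)]
  have h2 : (3/2 : ℝ) = 1/2 + 1 := by norm_num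
  rw [h2, Real.Gamma_add_one (by norm_num), Real.Gamma_one_half_eq]
  ring

lemma line0 : ∫ x : ℝ, Real.exp (-x ^ 2) = Real.sqrt π := by
  have := integral_gaussian 1
  simpa using this

lemma line1 : ∫ x : ℝ, x * Real.exp (-x ^ 2) = 0 := by
  have h := integral_neg_eq_self (fun y : ℝ => y * Real.exp (-y ^ 2)) volume
  simp only [neg_sq, neg_mul] at h
  rw [integral_neg] at h
  linarith [h]

lemma line2 : ∫ x : ℝ, x ^ 2 * Real.exp (-x ^ 2) = Real.sqrt π / 2 := by
  have h := integral_comp_abs (f := fun x : ℝ => x ^ 2 * Real.exp (-x ^ 2))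
  simp only [sq_abs] at h
  rw [h, ioi2]; ring

lemma lineAbs : ∫ x : ℝ, |x| * Real.exp (-x ^ 2) = 1 := by
  have h := integral_comp_abs (f := fun x : ℝ => x * Real.exp (-x ^ 2))
  simp only [sq_abs] at h
  rw [h, ioi1]; ring

/-! #### Gaussian integrals over `ℝ³` -/

lemma norm_sq_V3 (x : V3) : ‖x‖ ^ 2 = ∑ i, x i ^ 2 := by
  rw [EuclideanSpace.norm_eq, Real.sq_sqrt (by positivity)]
  simp [Real.norm_eq_abs, sq_abs]

lemma exp_neg_norm_sq (x : V3) : Real.exp (-‖x‖ ^ 2) = ∏ i, Real.exp (-(x i) ^ 2) := by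
  rw [norm_sq_V3, ← Real.exp_sum]
  congr 1
  rw [← Finset.sum_neg_distrib]

lemma v3_to_pi (F : V3 → ℝ) :
    ∫ x : V3, F x = ∫ y : Fin 3 → ℝ, F ((MeasurableEquiv.toLp 2 (Fin 3 → ℝ)) y) := by
  have h := (EuclideanSpace.volume_preserving_symm_measurableEquiv_toLp (Fin 3)).symm
    (MeasurableEquiv.toLp 2 (Fin 3 → ℝ)).symm
  exact (h.integral_comp' F).symm

lemma equiv_symm_apply (y : Fin 3 → ℝ) (i : Fin 3) :
    ((MeasurableEquiv.toLp 2 (Fin 3 → ℝ)) y) i = y i := by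
  rfl

lemma prod_if_fin3 (i : Fin 3) (a b : ℝ) :
    ∏ k : Fin 3, (if k = i then a else b) = a * b ^ 2 := by
  rw [← Finset.mul_prod_erase Finset.univ _ (Finset.mem_univ i), if_pos rfl]
  congr 1
  rw [Finset.prod_congr rfl (fun k hk => if_neg (Finset.ne_of_mem_erase hk)),
    Finset.prod_const]
  congr 1
  simp [Finset.card_erase_of_mem]

lemma gaussV3 (i j : Fin 3) :
    ∫ x : V3, x i * x j * Real.exp (-‖x‖ ^ 2)
      = if i = j then Real.sqrt π ^ 3 / 2 else 0 := by
  rw [v3_to_pi]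
  have hsplit : ∀ y : Fin 3 → ℝ,
      (fun x : V3 => x i * x j * Real.exp (-‖x‖ ^ 2))
        ((MeasurableEquiv.toLp 2 (Fin 3 → ℝ)) y)
      = ∏ k, (if k = i then y k else 1) * ((if k = j then y k else 1)
          * Real.exp (-(y k) ^ 2)) := by
    intro y
    simp only [exp_neg_norm_sq, equiv_symm_apply]
    rw [Finset.prod_mul_distrib, Finset.prod_mul_distrib,
      Finset.prod_ite_eq' Finset.univ i (fun k => y k),
      Finset.prod_ite_eq' Finset.univ j (fun k => y k)]
    simp [mul_assoc]
  rw [integral_congr_ae (Filter.Eventually.of_forall hsplit),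
    MeasureTheory.integral_fintype_prod_volume_eq_prod (ι := Fin 3)
      (f := fun k t => (if k = i then t else 1) * ((if k = j then t else 1)
        * Real.exp (-t ^ 2)))]
  rcases eq_or_ne i j with rfl | hij
  · have hval : ∀ k : Fin 3,
        (∫ t : ℝ, (if k = i then t else 1) * ((if k = i then t else 1)
          * Real.exp (-t ^ 2))) = if k = i then Real.sqrt π / 2 else Real.sqrt π := by
      intro k
      by_cases hk : k = i
      · simp only [if_pos hk]
        have : ∀ t : ℝ, t * (t * Real.exp (-t ^ 2)) = t ^ 2 * Real.exp (-t ^ 2) := by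
          intro t; ring
        rw [integral_congr_ae (Filter.Eventually.of_forall this), line2]
      · simp only [if_neg hk]
        simpa using line0
    simp only [eq_self_iff_true, if_true] at hval ⊢
    rw [Finset.prod_congr rfl (fun k _ => hval k), prod_if_fin3]
    ring
  · rw [if_neg hij]
    refine Finset.prod_eq_zero (Finset.mem_univ i) ?_
    have : ∀ t : ℝ, (if i = i then t else 1) * ((if i = j then t else 1)
        * Real.exp (-t ^ 2)) = t * Real.exp (-t ^ 2) := by
      intro t
      rw [if_pos rfl, if_neg hij, one_mul]
    rw [integral_congr_ae (Filter.Eventually.of_forall this), line1]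

lemma gaussAbsV3 : ∫ x : V3, |x 2| * Real.exp (-‖x‖ ^ 2) = π := by
  rw [v3_to_pi]
  have hsplit : ∀ y : Fin 3 → ℝ,
      (fun x : V3 => |x 2| * Real.exp (-‖x‖ ^ 2))
        ((MeasurableEquiv.toLp 2 (Fin 3 → ℝ)) y)
      = ∏ k, (if k = 2 then |y k| else 1) * Real.exp (-(y k) ^ 2) := by
    intro y
    simp only [exp_neg_norm_sq, equiv_symm_apply]
    rw [Finset.prod_mul_distrib, Finset.prod_ite_eq' Finset.univ 2 (fun k => |y k|)]
    simp
  rw [integral_congr_ae (Filter.Eventually.of_forall hsplit),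
    MeasureTheory.integral_fintype_prod_volume_eq_prod (ι := Fin 3)
      (f := fun k t => (if k = 2 then |t| else 1) * Real.exp (-t ^ 2))]
  have hval : ∀ k : Fin 3,
      (∫ t : ℝ, (if k = 2 then |t| else 1) * Real.exp (-t ^ 2))
        = if k = 2 then 1 else Real.sqrt π := by
    intro k
    by_cases hk : k = 2
    · simp only [if_pos hk]
      simpa using lineAbs
    · simp only [if_neg hk]
      simpa using line0
  rw [Finset.prod_congr rfl (fun k _ => hval k), prod_if_fin3,
    Real.sq_sqrt Real.pi_nonneg, one_mul]

/-! #### Polar decomposition -/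

lemma key_polar (g : Sph → ℝ) (f : ℝ → ℝ) (F : V3 → ℝ)
    (hF : ∀ x : ({(0 : V3)}ᶜ : Set V3),
      F x = g ((homeomorphUnitSphereProd V3 x).1) * f ((homeomorphUnitSphereProd V3 x).2 : ℝ)) :
    ∫ x : V3, F x = (∫ ω, g ω ∂dOmega) * ∫ r in Set.Ioi (0:ℝ), r ^ 2 * f r := by
  have h1 : ∫ x : V3, F x ∂volume
      = ∫ x : ({(0:V3)}ᶜ : Set V3), F x ∂((volume : Measure V3).comap (↑)) := by
    rw [integral_subtype_comap (measurableSet_singleton _).compl,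
      MeasureTheory.restrict_compl_singleton]
  have hdim : Module.finrank ℝ V3 = 3 := finrank_euclideanSpace_fin
  have h2 := ((volume : Measure V3).measurePreserving_homeomorphUnitSphereProd).integral_comp
    (Homeomorph.measurableEmbedding _) (fun p : Sph × Set.Ioi (0:ℝ) => g p.1 * f p.2)
  rw [hdim] at h2
  have h4 := integral_prod_mul (μ := (volume : Measure V3).toSphere)
    (ν := Measure.volumeIoiPow (3 - 1)) (f := g) (g := fun r : Set.Ioi (0:ℝ) => f r)
  have h3 : ∫ x : ({(0:V3)}ᶜ : Set V3), F x ∂((volume : Measure V3).comap (↑))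
      = ∫ x : ({(0:V3)}ᶜ : Set V3),
          g ((homeomorphUnitSphereProd V3 x).1) * f ((homeomorphUnitSphereProd V3 x).2 : ℝ)
          ∂((volume : Measure V3).comap (↑)) :=
    integral_congr_ae (Filter.Eventually.of_forall hF)
  rw [h1, h3, h2, h4]
  congr 1
  have hn : (3 - 1 : ℕ) = 2 := rfl
  rw [hn]
  simp only [Measure.volumeIoiPow, ENNReal.ofReal]
  rw [integral_withDensity_eq_integral_smul
    ((measurable_subtype_coe.pow_const _).real_toNNReal),
    integral_subtype_comap measurableSet_Ioi fun a : ℝ ↦ Real.toNNReal (a ^ 2) • f a,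
    setIntegral_congr_fun measurableSet_Ioi fun x hx ↦ ?_]
  rw [NNReal.smul_def, Real.coe_toNNReal _ (pow_nonneg hx.out.le _), smul_eq_mul]

/-! #### Sphere integrals -/

lemma dot_eq_inner (x y : V3) : dot x y = inner ℝ x y := by
  simp [dot, PiLp.inner_apply, RCLike.inner_apply, starRingEnd_apply, star_trivial, mul_comm]

lemma sph_moment (i j : Fin 3) :
    ∫ ω : Sph, (ω : V3) i * (ω : V3) j ∂dOmega = if i = j then 4 * π / 3 else 0 := by
  have hkey := key_polar (fun ω : Sph => (ω : V3) i * (ω : V3) j)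
    (fun r => r ^ 2 * Real.exp (-r ^ 2))
    (fun x : V3 => x i * x j * Real.exp (-‖x‖ ^ 2)) ?_
  · have hr : ∫ r in Set.Ioi (0:ℝ), r ^ 2 * (r ^ 2 * Real.exp (-r ^ 2))
        = 3 * Real.sqrt π / 8 := by
      rw [← ioi4]
      exact setIntegral_congr_fun measurableSet_Ioi fun x _ => by ring
    rw [gaussV3, hr] at hkey
    have hπ : Real.sqrt π ≠ 0 := ne_of_gt (Real.sqrt_pos.2 Real.pi_pos)
    have hsq : Real.sqrt π ^ 2 = π := Real.sq_sqrt Real.pi_nonneg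
    rcases eq_or_ne i j with rfl | hij
    · simp only [eq_self_iff_true, if_true] at hkey ⊢
      set S := ∫ ω : Sph, (ω : V3) i * (ω : V3) i ∂dOmega with hS
      have hS3 : Real.sqrt π ^ 3 = π * Real.sqrt π := by
        rw [pow_succ, hsq]
      have h2 : (S * 3 / 8) * Real.sqrt π = (π / 2) * Real.sqrt π := by
        rw [hS3] at hkey
        linear_combination -hkey
      have h3 := mul_right_cancel₀ hπ h2
      linarith
    · simp only [if_neg hij] at hkey ⊢
      have h8 : (3 : ℝ) * Real.sqrt π / 8 ≠ 0 := by positivity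
      rcases mul_eq_zero.1 hkey.symm with h | h
      · exact h
      · exact absurd h h8
  · rintro ⟨x, hx⟩
    have hx0 : x ≠ 0 := hx
    have hnx : ‖x‖ ≠ 0 := norm_ne_zero_iff.2 hx0
    simp only [homeomorphUnitSphereProd_apply_fst_coe, homeomorphUnitSphereProd_apply_snd_coe,
      PiLp.smul_apply, smul_eq_mul]
    field_simp

lemma gaussDot (v : V3) : ∫ x : V3, |dot x v| * Real.exp (-‖x‖ ^ 2) = π * ‖v‖ := by
  rcases eq_or_ne v 0 with rfl | hv
  · simp [dot]
  · set u : V3 := ‖v‖⁻¹ • v with hu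
    have hnu : ‖u‖ = 1 := norm_smul_inv_norm hv
    set e2 : V3 := EuclideanSpace.single 2 (1:ℝ) with he2
    have hne2 : ‖e2‖ = 1 := by simp [he2, EuclideanSpace.norm_single]
    let e : V3 ≃ₗᵢ[ℝ] V3 := Submodule.reflection (ℝ ∙ (u - e2))ᗮ
    have heu : e u = e2 := Submodule.reflection_sub (by rw [hnu, hne2])
    have hcomp := e.symm.measurePreserving.integral_comp
      e.symm.toHomeomorph.measurableEmbedding
      (fun x : V3 => |dot x v| * Real.exp (-‖x‖ ^ 2))
    rw [← hcomp]
    have hptwise : ∀ x : V3,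
        |dot (e.symm x) v| * Real.exp (-‖e.symm x‖ ^ 2)
          = ‖v‖ * (|x 2| * Real.exp (-‖x‖ ^ 2)) := by
      intro x
      have h2 : (inner ℝ (e.symm x) u : ℝ) = x 2 := by
        calc (inner ℝ (e.symm x) u : ℝ) = inner ℝ (e (e.symm x)) (e u) := (e.inner_map_map _ _).symm
          _ = inner ℝ x e2 := by rw [heu, LinearIsometryEquiv.apply_symm_apply]
          _ = x 2 := by
            rw [he2]
            simpa using EuclideanSpace.inner_single_right (𝕜 := ℝ) 2 1 x
      have h1 : dot (e.symm x) v = ‖v‖ * (x 2) := by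
        rw [dot_eq_inner]
        have hv' : v = ‖v‖ • u := by
          rw [hu, smul_smul, mul_inv_cancel₀ (norm_ne_zero_iff.2 hv), one_smul]
        conv_lhs => rw [hv']
        rw [real_inner_smul_right, h2]
      rw [h1, e.symm.norm_map, abs_mul, abs_of_nonneg (norm_nonneg v)]
      ring
    rw [integral_congr_ae (Filter.Eventually.of_forall hptwise), integral_const_mul,
      gaussAbsV3]
    ring

lemma sph_abs (v : V3) : ∫ ω : Sph, |dot (ω : V3) v| ∂dOmega = 2 * π * ‖v‖ := by
  have hkey := key_polar (fun ω : Sph => |dot (ω : V3) v|)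
    (fun r => r * Real.exp (-r ^ 2))
    (fun x : V3 => |dot x v| * Real.exp (-‖x‖ ^ 2)) ?_
  · have hr : ∫ r in Set.Ioi (0:ℝ), r ^ 2 * (r * Real.exp (-r ^ 2)) = 1 / 2 := by
      rw [← ioi3]
      exact setIntegral_congr_fun measurableSet_Ioi fun x _ => by ring
    rw [gaussDot, hr] at hkey
    linarith [hkey]
  · rintro ⟨x, hx⟩
    have hx0 : x ≠ 0 := hx
    have hnx : 0 < ‖x‖ := norm_pos_iff.2 hx0
    simp only [homeomorphUnitSphereProd_apply_fst_coe, homeomorphUnitSphereProd_apply_snd_coe]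
    have hd : dot (‖x‖⁻¹ • x) v = ‖x‖⁻¹ * dot x v := by
      simp [dot, PiLp.smul_apply, Finset.mul_sum, mul_assoc]
    rw [hd, abs_mul, abs_of_nonneg (inv_nonneg.2 hnx.le)]
    field_simp

/-! #### Algebraic helpers -/

def colV (T : Matrix (Fin 3) (Fin 3) ℝ) (v : V3) : V3 :=
  (WithLp.equiv 2 (Fin 3 → ℝ)).symm (fun i => ∑ j, T i j * v j)

def rowV (T : Matrix (Fin 3) (Fin 3) ℝ) (m : V3) : V3 :=
  (WithLp.equiv 2 (Fin 3 → ℝ)).symm (fun j => ∑ i, T i j * m i)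

lemma colV_apply (T : Matrix (Fin 3) (Fin 3) ℝ) (v : V3) (i : Fin 3) :
    colV T v i = ∑ j, T i j * v j := rfl

lemma rowV_apply (T : Matrix (Fin 3) (Fin 3) ℝ) (m : V3) (j : Fin 3) :
    rowV T m j = ∑ i, T i j * m i := rfl

lemma dot_comm (x y : V3) : dot x y = dot y x := by
  simp [dot, mul_comm]

lemma bilin_dot (T : Matrix (Fin 3) (Fin 3) ℝ) (m n : V3) :
    bilin T m n = dot m (colV T n) := by
  simp only [bilin, dot, colV_apply, Finset.mul_sum]
  exact Finset.sum_congr rfl fun i _ => Finset.sum_congr rfl fun j _ => by ring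

lemma bilin_row (T : Matrix (Fin 3) (Fin 3) ℝ) (m n : V3) :
    bilin T m n = dot n (rowV T m) := by
  simp only [bilin, dot, rowV_apply, Finset.mul_sum]
  rw [Finset.sum_comm]
  exact Finset.sum_congr rfl fun j _ => Finset.sum_congr rfl fun i _ => by ring

lemma sph_norm (ω : Sph) : ‖(ω : V3)‖ = 1 := by
  simpa using mem_sphere_zero_iff_norm.mp ω.2

lemma abs_dot_le (ω : Sph) (v : V3) : |dot (ω : V3) v| ≤ ‖v‖ := by
  rw [dot_eq_inner]
  calc |(inner ℝ ((ω : V3)) v : ℝ)| ≤ ‖(ω : V3)‖ * ‖v‖ := abs_real_inner_le_norm _ _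
    _ = ‖v‖ := by rw [sph_norm, one_mul]

lemma abs_coord_le (ω : Sph) (i : Fin 3) : |(ω : V3) i| ≤ 1 := by
  have h : (ω : V3) i = dot (ω : V3) (EuclideanSpace.single i (1:ℝ)) := by
    rw [dot_eq_inner]
    simpa using (EuclideanSpace.inner_single_right (𝕜 := ℝ) i 1 (ω : V3)).symm
  rw [h]
  calc |dot (ω : V3) (EuclideanSpace.single i (1:ℝ))| ≤ ‖EuclideanSpace.single i (1:ℝ)‖ :=
        abs_dot_le ω _
    _ = 1 := by simp [EuclideanSpace.norm_single]

/-! #### Integrability on the sphere -/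

lemma integrable_sph {f : Sph → ℝ} (hf : AEStronglyMeasurable f dOmega) (C : ℝ)
    (hC : ∀ ω, |f ω| ≤ C) : Integrable f dOmega := by
  refine Integrable.mono' (integrable_const C) hf (Filter.Eventually.of_forall fun ω => ?_)
  simpa [Real.norm_eq_abs] using hC ω

lemma continuous_dot (v : V3) : Continuous fun ω : Sph => dot (ω : V3) v := by
  simp only [dot_eq_inner]
  exact Continuous.inner continuous_subtype_val continuous_const

lemma continuous_coord (i : Fin 3) : Continuous fun ω : Sph => (ω : V3) i := by
  exact (EuclideanSpace.proj i).continuous.comp continuous_subtype_val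

lemma integrable_coord_mul (i j : Fin 3) :
    Integrable (fun ω : Sph => (ω : V3) i * (ω : V3) j) dOmega := by
  refine integrable_sph (((continuous_coord i).mul (continuous_coord j)).aestronglyMeasurable)
    1 fun ω => ?_
  rw [abs_mul]
  exact mul_le_one₀ (abs_coord_le ω i) (abs_nonneg _) (abs_coord_le ω j)

lemma integrable_dot_mul (a v : V3) :
    Integrable (fun ω : Sph => dot (ω : V3) a * dot (ω : V3) v) dOmega := by
  refine integrable_sph (((continuous_dot a).mul (continuous_dot v)).aestronglyMeasurable)
    (‖a‖ * ‖v‖) fun ω => ?_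
  rw [abs_mul]
  exact mul_le_mul (abs_dot_le ω a) (abs_dot_le ω v) (abs_nonneg _) (norm_nonneg _)

lemma integrable_abs_dot (v : V3) :
    Integrable (fun ω : Sph => |dot (ω : V3) v|) dOmega := by
  refine integrable_sph ((continuous_dot v).abs.aestronglyMeasurable) ‖v‖ fun ω => ?_
  rw [abs_abs]
  exact abs_dot_le ω v

/-! #### Second moment identity -/

lemma integral_dot_dot (a v : V3) :
    ∫ ω : Sph, dot (ω : V3) a * dot (ω : V3) v ∂dOmega = (4 * π / 3) * dot a v := by
  have hpt : ∀ ω : Sph, dot (ω : V3) a * dot (ω : V3) v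
      = ∑ i, ∑ j, (a i * v j) * ((ω : V3) i * (ω : V3) j) := by
    intro ω
    rw [dot, dot, Finset.sum_mul_sum]
    exact Finset.sum_congr rfl fun i _ => Finset.sum_congr rfl fun j _ => by ring
  rw [integral_congr_ae (Filter.Eventually.of_forall hpt)]
  rw [integral_finset_sum _ (fun i _ => integrable_finset_sum _
    (fun j _ => (integrable_coord_mul i j).const_mul _))]
  have : ∀ i, ∫ ω : Sph, (∑ j, (a i * v j) * ((ω : V3) i * (ω : V3) j)) ∂dOmega
      = ∑ j, (a i * v j) * (if i = j then 4 * π / 3 else 0) := by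
    intro i
    rw [integral_finset_sum _ (fun j _ => (integrable_coord_mul i j).const_mul _)]
    exact Finset.sum_congr rfl fun j _ => by
      rw [integral_const_mul, sph_moment]
  rw [Finset.sum_congr rfl fun i _ => this i]
  simp only [mul_ite, mul_zero, Finset.sum_ite_eq, Finset.mem_univ, if_true]
  rw [dot, Finset.mul_sum]
  exact Finset.sum_congr rfl fun i _ => by ring

end Aux

/-- For any real `3×3` matrix `T` with largest singular value `T₁` and any
correlation function `E_NS` admitting an LHS model,
`∫∫ (m · T n) E_NS(m,n) dΩ(m) dΩ(n) ≤ (8π²/3) T₁`. -/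
theorem scalar_product_nonsteering_bound (T : Matrix (Fin 3) (Fin 3) ℝ) (E : V3 → V3 → ℝ)
    (h : HasLHSModel E) :
    (∫ m, ∫ n, bilin T m n * E m n ∂dOmega ∂dOmega) ≤
      (8 * Real.pi ^ 2 / 3) * maxSingularValue T := by
  classical
  obtain ⟨N, p, I, lam, hp0, hp1, hImeas, hIbd, hlam, hE⟩ := h
  set π' : ℝ := Real.pi with hπ'
  set S : Set ℝ := {x : ℝ | ∃ m n : V3, ‖m‖ = 1 ∧ ‖n‖ = 1 ∧ x = bilin T m n} with hSdef
  set T1 : ℝ := maxSingularValue T with hT1def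
  -- the set is bounded above
  have hbdd : BddAbove S := by
    refine ⟨∑ i, ∑ j, |T i j|, ?_⟩
    rintro x ⟨m, n, hm, hn, rfl⟩
    calc bilin T m n ≤ |bilin T m n| := le_abs_self _
      _ ≤ ∑ i, |∑ j, T i j * m i * n j| := Finset.abs_sum_le_sum_abs _ _
      _ ≤ ∑ i, ∑ j, |T i j * m i * n j| :=
          Finset.sum_le_sum fun i _ => Finset.abs_sum_le_sum_abs _ _
      _ ≤ ∑ i, ∑ j, |T i j| := by
          refine Finset.sum_le_sum fun i _ => Finset.sum_le_sum fun j _ => ?_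
          rw [abs_mul, abs_mul]
          have hmi : |m i| ≤ 1 := by
            simpa using abs_coord_le (⟨m, by simpa [Metric.mem_sphere] using hm⟩ : Sph) i
          have hnj : |n j| ≤ 1 := by
            simpa using abs_coord_le (⟨n, by simpa [Metric.mem_sphere] using hn⟩ : Sph) j
          calc |T i j| * |m i| * |n j| ≤ |T i j| * 1 * 1 := by
                refine mul_le_mul (mul_le_mul le_rfl hmi (abs_nonneg _) (abs_nonneg _)) hnj
                  (abs_nonneg _) (by positivity)
            _ = |T i j| := by ring
  -- basis vector for nonemptiness
  have he1 : ‖(EuclideanSpace.single 0 (1:ℝ) : V3)‖ = 1 := by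
    simp [EuclideanSpace.norm_single]
  have hT1_nonneg : 0 ≤ T1 := by
    set m0 : V3 := EuclideanSpace.single 0 (1:ℝ) with hm0
    have hmem1 : bilin T m0 m0 ∈ S := ⟨m0, m0, he1, he1, rfl⟩
    have hmem2 : -bilin T m0 m0 ∈ S := by
      refine ⟨-m0, m0, by rw [norm_neg]; exact he1, he1, ?_⟩
      simp only [bilin]
      rw [← Finset.sum_neg_distrib]
      refine Finset.sum_congr rfl fun i _ => ?_
      rw [← Finset.sum_neg_distrib]
      refine Finset.sum_congr rfl fun j _ => ?_
      have : (-m0 : V3) i = -(m0 i) := rfl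
      rw [this]; ring
    rcases le_total 0 (bilin T m0 m0) with hx | hx
    · exact le_trans hx (le_csSup hbdd hmem1)
    · exact le_trans (by linarith) (le_csSup hbdd hmem2)
  have hT1_ge : ∀ v : V3, ‖v‖ = 1 → ‖colV T v‖ ≤ T1 := by
    intro v hv
    rcases eq_or_ne (colV T v) 0 with h0 | h0
    · rw [h0, norm_zero]; exact hT1_nonneg
    · set w : V3 := colV T v with hw
      have hmem : ‖w‖ ∈ S := by
        refine ⟨‖w‖⁻¹ • w, v, norm_smul_inv_norm h0, hv, ?_⟩
        rw [bilin_dot, dot_eq_inner, ← hw, real_inner_smul_left,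
          real_inner_self_eq_norm_sq, sq, ← mul_assoc,
          inv_mul_cancel₀ (norm_ne_zero_iff.2 h0), one_mul]
      exact le_csSup hbdd hmem
  -- inner integral
  have hinner : ∀ m : Sph, (∫ n : Sph, bilin T (m : V3) (n : V3) * E (m : V3) (n : V3) ∂dOmega)
      = ∑ l, (p l * I l m) * ((4 * π' / 3) * dot (m : V3) (colV T (lam l))) := by
    intro m
    have hpt : ∀ n : Sph, bilin T (m : V3) (n : V3) * E (m : V3) (n : V3)
        = ∑ l, (p l * I l m) * (dot (n : V3) (rowV T (m : V3)) * dot (n : V3) (lam l)) := by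
      intro n
      rw [hE m n, Finset.mul_sum]
      refine Finset.sum_congr rfl fun l _ => ?_
      rw [← bilin_row]
      ring
    rw [integral_congr_ae (Filter.Eventually.of_forall hpt),
      integral_finset_sum _ (fun l _ => (integrable_dot_mul _ _).const_mul _)]
    refine Finset.sum_congr rfl fun l _ => ?_
    rw [integral_const_mul, integral_dot_dot]
    have hdd : dot (rowV T (m : V3)) (lam l) = dot (m : V3) (colV T (lam l)) := by
      rw [dot_comm, ← bilin_row, bilin_dot]
    rw [hdd]
  rw [integral_congr_ae (Filter.Eventually.of_forall hinner)]
  -- integrability of each summand in the outer integral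
  have houtint : ∀ l : Fin N, Integrable
      (fun m : Sph => (p l * I l m) * ((4 * π' / 3) * dot (m : V3) (colV T (lam l))))
      dOmega := by
    intro l
    refine integrable_sph ?_ (p l * ((4 * π' / 3) * ‖colV T (lam l)‖)) ?_
    · exact (((hImeas l).const_mul (p l)).mul
        (((continuous_dot (colV T (lam l))).measurable).const_mul (4 * π' / 3))).aestronglyMeasurable
    · intro ω
      rw [abs_mul, abs_mul, abs_mul]
      have h1 : |p l| * |I l ω| ≤ p l := by
        rw [abs_of_nonneg (hp0 l)]
        nlinarith [hIbd l ω, hp0 l, abs_nonneg (I l ω)]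
      have h2 : |4 * π' / 3| * |dot (ω : V3) (colV T (lam l))|
          ≤ (4 * π' / 3) * ‖colV T (lam l)‖ := by
        rw [abs_of_nonneg (by positivity : (0:ℝ) ≤ 4 * π' / 3)]
        exact mul_le_mul_of_nonneg_left (abs_dot_le ω _) (by positivity)
      exact mul_le_mul h1 h2 (by positivity) (hp0 l)
  rw [integral_finset_sum _ (fun l _ => houtint l)]
  -- bound each term
  have hterm : ∀ l : Fin N,
      (∫ m : Sph, (p l * I l m) * ((4 * π' / 3) * dot (m : V3) (colV T (lam l))) ∂dOmega)
        ≤ p l * ((8 * π' ^ 2 / 3) * T1) := by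
    intro l
    have hstep1 : (∫ m : Sph, (p l * I l m) * ((4 * π' / 3) * dot (m : V3) (colV T (lam l)))
          ∂dOmega)
        ≤ ∫ m : Sph, (p l * (4 * π' / 3)) * |dot (m : V3) (colV T (lam l))| ∂dOmega := by
      refine integral_mono (houtint l) ((integrable_abs_dot _).const_mul _) fun ω => ?_
      have hI : I l ω * dot (ω : V3) (colV T (lam l)) ≤ |dot (ω : V3) (colV T (lam l))| := by
        calc I l ω * dot (ω : V3) (colV T (lam l))
            ≤ |I l ω * dot (ω : V3) (colV T (lam l))| := le_abs_self _
          _ = |I l ω| * |dot (ω : V3) (colV T (lam l))| := abs_mul _ _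
          _ ≤ 1 * |dot (ω : V3) (colV T (lam l))| :=
              mul_le_mul_of_nonneg_right (hIbd l ω) (abs_nonneg _)
          _ = |dot (ω : V3) (colV T (lam l))| := one_mul _
      calc (p l * I l ω) * ((4 * π' / 3) * dot (ω : V3) (colV T (lam l)))
          = (p l * (4 * π' / 3)) * (I l ω * dot (ω : V3) (colV T (lam l))) := by ring
        _ ≤ (p l * (4 * π' / 3)) * |dot (ω : V3) (colV T (lam l))| :=
            mul_le_mul_of_nonneg_left hI (mul_nonneg (hp0 l) (by positivity))
    have hstep2 : (∫ m : Sph, (p l * (4 * π' / 3)) * |dot (m : V3) (colV T (lam l))| ∂dOmega)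
        = (p l * (4 * π' / 3)) * (2 * π' * ‖colV T (lam l)‖) := by
      rw [integral_const_mul, sph_abs]
    have hstep3 : (p l * (4 * π' / 3)) * (2 * π' * ‖colV T (lam l)‖)
        ≤ p l * ((8 * π' ^ 2 / 3) * T1) := by
      have hn := hT1_ge (lam l) (hlam l)
      have : (2 * π' * ‖colV T (lam l)‖) ≤ 2 * π' * T1 :=
        mul_le_mul_of_nonneg_left hn (by positivity)
      calc (p l * (4 * π' / 3)) * (2 * π' * ‖colV T (lam l)‖)
          ≤ (p l * (4 * π' / 3)) * (2 * π' * T1) :=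
            mul_le_mul_of_nonneg_left this (mul_nonneg (hp0 l) (by positivity))
        _ = p l * ((8 * π' ^ 2 / 3) * T1) := by ring
    linarith [hstep1, hstep2.le, hstep2.ge, hstep3]
  calc (∑ l, ∫ m : Sph, (p l * I l m) * ((4 * π' / 3) * dot (m : V3) (colV T (lam l))) ∂dOmega)
      ≤ ∑ l, p l * ((8 * π' ^ 2 / 3) * T1) := Finset.sum_le_sum fun l _ => hterm l
    _ = (8 * π' ^ 2 / 3) * T1 := by rw [← Finset.sum_mul, hp1, one_mul]
    _ = (8 * Real.pi ^ 2 / 3) * maxSingularValue T := by rw [hπ', hT1def]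

end
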